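/- Suppose G⁻(λ) < ρ. Then the minimax risk equals Δ = h·(b − (b+h)·G⁻(λ))·(M − λ) / ((b+h)·(1 − G⁻(λ))), this value is nonnegative, and the infimum defining Δ is attained at the unidentifiable ordering quantity q†_G, which lies in the interval [λ, M]; that is, Regret(q†_G) = Δ. -/

import Mathlib

set_option linter.unusedSectionVars false
set_option maxHeartbeats 1000000


open MeasureTheory Set

/-- Newsvendor cost of ordering quantity `q` under demand distribution `F`,
with underage cost `b` and overage cost `h`. -/
noncomputable def nvCost (b h : ℝ) (F : Measure ℝ) (q : ℝ) : ℝ :=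
  ∫ x, (b * max (x - q) 0 + h * max (q - x) 0) ∂F

/-- Optimal newsvendor quantity: the `ρ`-th quantile of `F`. -/
noncomputable def qStar (ρ : ℝ) (F : Measure ℝ) : ℝ :=
  sInf {q : ℝ | ρ ≤ (F (Iic q)).toReal}

/-- The set `𝒢` of admissible demand distributions: Borel probability measures on ℝ
supported on `[0, ∞)` with finite mean and optimal newsvendor quantity at most `M`. -/
def GoodDist (ρ M : ℝ) : Set (Measure ℝ) :=
  {F | IsProbabilityMeasure F ∧ F (Iio 0) = 0 ∧ Integrable id F ∧ qStar ρ F ≤ M}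

/-- The ambiguity set `𝒜_λ`: all admissible distributions agreeing with `G` before `lam`. -/
def Ambig (ρ M : ℝ) (G : Measure ℝ) (lam : ℝ) : Set (Measure ℝ) :=
  {F | F ∈ GoodDist ρ M ∧ ∀ x < lam, F (Iic x) = G (Iic x)}

/-- Worst-case regret of an ordering quantity `q` over the ambiguity set. -/
noncomputable def Regret (b h ρ M : ℝ) (G : Measure ℝ) (lam q : ℝ) : ℝ :=
  sSup ((fun F => nvCost b h F q - nvCost b h F (qStar ρ F)) '' Ambig ρ M G lam)

/-- Minimax risk `Δ`. -/
noncomputable def Risk (b h ρ M : ℝ) (G : Measure ℝ) (lam : ℝ) : ℝ :=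
  sInf (Regret b h ρ M G lam '' Icc 0 M)

/-- The unidentifiable ordering quantity `q†_G`. -/
noncomputable def qDagger (b h M : ℝ) (G : Measure ℝ) (lam : ℝ) : ℝ :=
  (b * M + h * lam - (b + h) * (G (Iio lam)).toReal * M) /
    ((b + h) * (1 - (G (Iio lam)).toReal))

/-- The two-point-tail distribution `F_p`: agrees with `G` on `[0, λ)`, places an atom
of mass `p` at `λ` and an atom of mass `1 - p - G⁻(λ)` at `M`. -/
noncomputable def Fp (G : Measure ℝ) (lam M p : ℝ) : Measure ℝ :=
  G.restrict (Iio lam) + ENNReal.ofReal p • Measure.dirac lam +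
    ENNReal.ofReal (1 - p - (G (Iio lam)).toReal) • Measure.dirac M

/-- The `N`-fold product (i.i.d.) measure of `G` (equal to `Measure.pi` whenever `G`
is sigma-finite, in particular for probability measures). -/
noncomputable def iidPi (N : ℕ) (G : Measure ℝ) : Measure (Fin N → ℝ) := by
  classical
  exact if h : SigmaFinite G then
    haveI := h
    Measure.pi fun _ => G
  else 0

section CDF
variable {F : Measure ℝ} [IsFiniteMeasure F]

lemma cdf_mono {t u : ℝ} (h : t ≤ u) : (F (Iic t)).toReal ≤ (F (Iic u)).toReal :=
  ENNReal.toReal_le_toReal (measure_ne_top _ _) (measure_ne_top _ _) |>.mpr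
    (measure_mono (Iic_subset_Iic.mpr h))

lemma cdf_measurable : Measurable fun t => (F (Iic t)).toReal :=
  Monotone.measurable fun _ _ h => cdf_mono h

lemma cdf_nonneg (t : ℝ) : 0 ≤ (F (Iic t)).toReal := ENNReal.toReal_nonneg

lemma cdf_le_one [IsProbabilityMeasure F] (t : ℝ) : (F (Iic t)).toReal ≤ 1 := by
  have := prob_le_one (μ := F) (s := Iic t)
  simpa using ENNReal.toReal_le_toReal (measure_ne_top _ _) (by simp) |>.mpr this

end CDF

section QStar
variable {ρ : ℝ} {F : Measure ℝ} [IsProbabilityMeasure F]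

lemma qStar_set_nonempty (hρ1 : ρ < 1) : {q : ℝ | ρ ≤ (F (Iic q)).toReal}.Nonempty := by
  have h1 : Filter.Tendsto (fun r => (F (Iic r)).toReal) Filter.atTop (nhds 1) := by
    have := tendsto_measure_Iic_atTop F
    rw [measure_univ] at this
    exact (ENNReal.tendsto_toReal ENNReal.one_ne_top).comp this
  obtain ⟨q, hq⟩ := (h1.eventually (eventually_gt_nhds hρ1)).exists
  exact ⟨q, hq.le⟩

lemma qStar_set_bddBelow (hρ0 : 0 < ρ) (h0 : F (Iio 0) = 0) :
    BddBelow {q : ℝ | ρ ≤ (F (Iic q)).toReal} := by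
  refine ⟨0, fun q hq => ?_⟩
  by_contra hq0
  push_neg at hq0
  have : F (Iic q) = 0 := measure_mono_null (fun x hx => lt_of_le_of_lt hx hq0) h0
  simp only [mem_setOf_eq, this, ENNReal.toReal_zero] at hq
  linarith

lemma qStar_le (hρ0 : 0 < ρ) (h0 : F (Iio 0) = 0) {c : ℝ}
    (hc : ρ ≤ (F (Iic c)).toReal) : qStar ρ F ≤ c :=
  csInf_le (qStar_set_bddBelow hρ0 h0) hc

lemma qStar_ge (hρ1 : ρ < 1) {c : ℝ} (hc : ∀ t, t < c → (F (Iic t)).toReal < ρ) :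
    c ≤ qStar ρ F := by
  refine le_csInf (qStar_set_nonempty hρ1) fun s hs => ?_
  by_contra hsc
  push_neg at hsc
  exact absurd hs (not_le.mpr (hc s hsc))

lemma qStar_nonneg (hρ0 : 0 < ρ) (hρ1 : ρ < 1) (h0 : F (Iio 0) = 0) : 0 ≤ qStar ρ F := by
  refine le_csInf (qStar_set_nonempty hρ1) fun s hs => ?_
  by_contra hsc
  push_neg at hsc
  have : F (Iic s) = 0 := measure_mono_null (fun x hx => lt_of_le_of_lt hx hsc) h0
  simp only [mem_setOf_eq, this, ENNReal.toReal_zero] at hs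
  linarith

lemma cdf_qStar_ge (hρ0 : 0 < ρ) (hρ1 : ρ < 1) (h0 : F (Iio 0) = 0) :
    ρ ≤ (F (Iic (qStar ρ F))).toReal := by
  set S := {q : ℝ | ρ ≤ (F (Iic q)).toReal} with hS
  have hne := qStar_set_nonempty (F := F) hρ1
  have hbdd := qStar_set_bddBelow (F := F) hρ0 h0
  set r : ℕ → ℝ := fun n => qStar ρ F + (n + 1 : ℝ)⁻¹ with hr
  have hrge : ∀ n, ρ ≤ (F (Iic (r n))).toReal := by
    intro n
    have hlt : qStar ρ F < r n := by
      have : (0:ℝ) < (n + 1 : ℝ)⁻¹ := by positivity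
      simp only [hr]; linarith
    obtain ⟨s, hsS, hs⟩ := exists_lt_of_csInf_lt hne hlt
    exact le_trans hsS (cdf_mono hs.le)
  have hiInter : Iic (qStar ρ F) = ⋂ n, Iic (r n) := by
    ext x
    simp only [mem_Iic, mem_iInter]
    constructor
    · intro hx n
      have : (0:ℝ) < (n + 1 : ℝ)⁻¹ := by positivity
      simp only [hr]; linarith
    · intro hx
      by_contra hgt
      push_neg at hgt
      obtain ⟨n, hn⟩ := exists_nat_one_div_lt (sub_pos.mpr hgt)
      have := hx n
      rw [hr] at this
      rw [one_div] at hn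
      linarith
  have htend : Filter.Tendsto (fun n => (F (Iic (r n))).toReal) Filter.atTop
      (nhds ((F (Iic (qStar ρ F))).toReal)) := by
    rw [hiInter]
    exact (ENNReal.tendsto_toReal (measure_ne_top _ _)).comp
      (tendsto_measure_iInter_atTop (fun n => (measurableSet_Iic).nullMeasurableSet)
        (fun m n hmn => Iic_subset_Iic.mpr (by
          simp only [hr]
          have h1 : ((m:ℝ)+1) ≤ ((n:ℝ)+1) := by exact_mod_cast Nat.succ_le_succ hmn
          have h2 : (0:ℝ) < (m:ℝ)+1 := by positivity
          gcongr))
        ⟨0, measure_ne_top _ _⟩)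
  exact ge_of_tendsto htend (Filter.Eventually.of_forall hrge)

end QStar

lemma vol_inter (s q x : ℝ) (hsq : s ≤ q) :
    ((volume : Measure ℝ) (Ici x ∩ Ioc s q)).toReal = max q x - max s x := by
  rcases le_or_gt x s with hxs | hxs
  · have : Ici x ∩ Ioc s q = Ioc s q := inter_eq_self_of_subset_right
      (fun t ht => le_trans hxs ht.1.le)
    rw [this, Real.volume_Ioc, ENNReal.toReal_ofReal (by linarith)]
    rw [max_eq_left (le_trans hxs hsq), max_eq_left hxs]
  · rcases le_or_gt x q with hxq | hxq
    · have : Ici x ∩ Ioc s q = Icc x q := by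
        ext t; simp only [mem_inter_iff, mem_Ici, mem_Ioc, mem_Icc]
        constructor
        · rintro ⟨h1, _, h3⟩; exact ⟨h1, h3⟩
        · rintro ⟨h1, h2⟩; exact ⟨h1, lt_of_lt_of_le hxs h1, h2⟩
      rw [this, Real.volume_Icc, ENNReal.toReal_ofReal (by linarith)]
      rw [max_eq_left hxq, max_eq_right hxs.le]
    · have : Ici x ∩ Ioc s q = ∅ := by
        ext t; simp only [mem_inter_iff, mem_Ici, mem_Ioc, mem_empty_iff_false, iff_false]
        rintro ⟨h1, _, h3⟩; linarith
      rw [this, measure_empty, ENNReal.toReal_zero, max_eq_right hxq.le,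
        max_eq_right hxs.le]
      ring

lemma integral_cdf_eq (F : Measure ℝ) [IsProbabilityMeasure F] (s q : ℝ) (hsq : s ≤ q) :
    ∫ t in Ioc s q, (F (Iic t)).toReal = ∫ x, (max q x - max s x) ∂F := by
  set μ := (volume : Measure ℝ).restrict (Ioc s q) with hμ
  set S := {p : ℝ × ℝ | p.2 ≤ p.1} with hSdef
  have hSmeas : MeasurableSet S := measurableSet_le measurable_snd measurable_fst
  have hint : Integrable (fun p : ℝ × ℝ => S.indicator (fun _ => (1:ℝ)) p) (μ.prod F) := by
    rw [integrable_indicator_iff hSmeas]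
    exact (integrableOn_const_iff (C := (1:ℝ))).mpr (Or.inr (measure_lt_top _ _))
  have hswap := integral_integral_swap
    (f := fun t x => S.indicator (fun _ => (1:ℝ)) (t, x)) (μ := μ) (ν := F) hint
  have hL : (∫ t, ∫ x, S.indicator (fun _ => (1:ℝ)) (t, x) ∂F ∂μ)
      = ∫ t in Ioc s q, (F (Iic t)).toReal := by
    refine integral_congr_ae (Filter.Eventually.of_forall fun t => ?_)
    show ∫ x : ℝ, S.indicator (fun _ => (1:ℝ)) (t, x) ∂F = (F (Iic t)).toReal
    have h1 : (fun x => S.indicator (fun _ => (1:ℝ)) (t, x))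
        = (Iic t).indicator (fun _ => (1:ℝ)) := by
      ext x; by_cases hx : x ≤ t <;> simp [hSdef, indicator, hx]
    rw [h1, integral_indicator_const _ measurableSet_Iic, smul_eq_mul, mul_one, measureReal_def]
  have hR : (∫ x, ∫ t, S.indicator (fun _ => (1:ℝ)) (t, x) ∂μ ∂F)
      = ∫ x, (max q x - max s x) ∂F := by
    refine integral_congr_ae (Filter.Eventually.of_forall fun x => ?_)
    show ∫ t : ℝ, S.indicator (fun _ => (1:ℝ)) (t, x) ∂μ = max q x - max s x
    have h1 : (fun t => S.indicator (fun _ => (1:ℝ)) (t, x))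
        = (Ici x).indicator (fun _ => (1:ℝ)) := by
      ext t; by_cases ht : x ≤ t <;> simp [hSdef, indicator, ht]
    rw [h1, integral_indicator_const _ measurableSet_Ici, smul_eq_mul, mul_one, hμ,
      measureReal_def, Measure.restrict_apply measurableSet_Ici, vol_inter s q x hsq]
  rw [← hL, hswap, hR]

lemma int_max {F : Measure ℝ} [IsFiniteMeasure F] (hInt : Integrable id F) (r : ℝ) :
    Integrable (fun x => max r x) F := by
  refine Integrable.mono' (hInt.abs.add (integrable_const |r|))
    ((continuous_const.max continuous_id).aestronglyMeasurable)
    (Filter.Eventually.of_forall fun x => ?_)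
  simp only [Real.norm_eq_abs, id_eq, Pi.add_apply]
  rw [abs_le]
  constructor
  · exact le_trans (by linarith [neg_abs_le r, abs_nonneg x]) (le_max_left r x)
  · exact max_le (by linarith [le_abs_self r, abs_nonneg x])
      (by linarith [le_abs_self x, abs_nonneg r])

lemma cost_integrable {b h : ℝ} (hb : 0 < b) (hh : 0 < h) {F : Measure ℝ} [IsFiniteMeasure F]
    (hInt : Integrable id F) (r : ℝ) :
    Integrable (fun x => b * max (x - r) 0 + h * max (r - x) 0) F := by
  refine Integrable.mono' (((hInt.abs.add (integrable_const |r|)).const_mul (b + h)))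
    ?_ (Filter.Eventually.of_forall fun x => ?_)
  · exact ((continuous_const.mul ((continuous_id.sub continuous_const).max continuous_const)).add
      (continuous_const.mul ((continuous_const.sub continuous_id).max continuous_const))).aestronglyMeasurable
  · simp only [Real.norm_eq_abs, id_eq, Pi.add_apply]
    have m1 : max (x - r) 0 ≤ |x| + |r| :=
      max_le (by linarith [le_abs_self x, neg_abs_le r]) (by positivity)
    have m2 : max (r - x) 0 ≤ |x| + |r| :=
      max_le (by linarith [le_abs_self r, neg_abs_le x]) (by positivity)
    have n1 : (0:ℝ) ≤ max (x - r) 0 := le_max_right _ _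
    have n2 : (0:ℝ) ≤ max (r - x) 0 := le_max_right _ _
    rw [abs_of_nonneg (by positivity)]
    nlinarith

lemma nvCost_diff (b h : ℝ) (hb : 0 < b) (hh : 0 < h) (F : Measure ℝ) [IsProbabilityMeasure F]
    (hInt : Integrable id F) (s q : ℝ) (hsq : s ≤ q) :
    nvCost b h F q - nvCost b h F s
      = (b + h) * (∫ t in Ioc s q, (F (Iic t)).toReal) - b * (q - s) := by
  have hfq := cost_integrable hb hh hInt q
  have hfs := cost_integrable hb hh hInt s
  have hmax : Integrable (fun x => max q x - max s x) F := (int_max hInt q).sub (int_max hInt s)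
  have key : ∀ x : ℝ, (b * max (x - q) 0 + h * max (q - x) 0)
      - (b * max (x - s) 0 + h * max (s - x) 0)
      = (b + h) * (max q x - max s x) - b * (q - s) := by
    intro x
    rcases le_or_gt x s with hxs | hxs
    · have hxq : x ≤ q := hxs.trans hsq
      rw [max_eq_right (sub_nonpos.mpr hxq), max_eq_left (sub_nonneg.mpr hxq),
        max_eq_right (sub_nonpos.mpr hxs), max_eq_left (sub_nonneg.mpr hxs),
        max_eq_left hxq, max_eq_left hxs]
      ring
    · rcases le_or_gt x q with hxq | hxq
      · rw [max_eq_right (sub_nonpos.mpr hxq), max_eq_left (sub_nonneg.mpr hxq),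
          max_eq_left (sub_nonneg.mpr hxs.le), max_eq_right (sub_nonpos.mpr hxs.le),
          max_eq_left hxq, max_eq_right hxs.le]
        ring
      · rw [max_eq_left (sub_nonneg.mpr hxq.le), max_eq_right (sub_nonpos.mpr hxq.le),
          max_eq_left (sub_nonneg.mpr hxs.le), max_eq_right (sub_nonpos.mpr hxs.le),
          max_eq_right hxq.le, max_eq_right hxs.le]
        ring
  rw [nvCost, nvCost, ← integral_sub hfq hfs]
  calc ∫ x, ((b * max (x - q) 0 + h * max (q - x) 0)
        - (b * max (x - s) 0 + h * max (s - x) 0)) ∂F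
      = ∫ x, ((b + h) * (max q x - max s x) - b * (q - s)) ∂F :=
        integral_congr_ae (Filter.Eventually.of_forall fun x => key x)
    _ = (b + h) * (∫ x, (max q x - max s x) ∂F) - b * (q - s) := by
        rw [integral_sub (hmax.const_mul _) (integrable_const _), integral_const_mul,
          integral_const, measureReal_def, measure_univ, ENNReal.toReal_one, one_smul]
    _ = (b + h) * (∫ t in Ioc s q, (F (Iic t)).toReal) - b * (q - s) := by
        rw [integral_cdf_eq F s q hsq]

lemma cdf_integrableOn {F : Measure ℝ} [IsProbabilityMeasure F] {s q : ℝ} :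
    IntegrableOn (fun t => (F (Iic t)).toReal) (Ioo s q) volume := by
  have hvol : volume (Ioo s q) < ⊤ := by rw [Real.volume_Ioo]; exact ENNReal.ofReal_lt_top
  refine Integrable.mono' ((integrableOn_const_iff (C := (1:ℝ))).mpr (Or.inr hvol))
    ((cdf_measurable (F := F)).aestronglyMeasurable.restrict)
    (Filter.Eventually.of_forall fun t => ?_)
  rw [Real.norm_eq_abs, abs_of_nonneg ENNReal.toReal_nonneg]
  exact cdf_le_one t

lemma integral_cdf_le {F : Measure ℝ} [IsProbabilityMeasure F] {s q C : ℝ} (hsq : s ≤ q)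
    (hub : ∀ t ∈ Ioo s q, (F (Iic t)).toReal ≤ C) :
    ∫ t in Ioc s q, (F (Iic t)).toReal ≤ C * (q - s) := by
  rw [← setIntegral_congr_set (Ioo_ae_eq_Ioc (a := s) (b := q))]
  have h2 := setIntegral_mono_on cdf_integrableOn
    ((integrableOn_const_iff (C := C)).mpr (Or.inr (by rw [Real.volume_Ioo]; exact ENNReal.ofReal_lt_top)))
    measurableSet_Ioo hub
  rwa [setIntegral_const, measureReal_def, Real.volume_Ioo, ENNReal.toReal_ofReal (by linarith),
    smul_eq_mul, mul_comm] at h2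

lemma integral_cdf_ge {F : Measure ℝ} [IsProbabilityMeasure F] {s q c : ℝ} (hsq : s ≤ q)
    (hlb : ∀ t ∈ Ioo s q, c ≤ (F (Iic t)).toReal) :
    c * (q - s) ≤ ∫ t in Ioc s q, (F (Iic t)).toReal := by
  rw [← setIntegral_congr_set (Ioo_ae_eq_Ioc (a := s) (b := q))]
  have h2 := setIntegral_mono_on
    ((integrableOn_const_iff (C := c)).mpr (Or.inr (by rw [Real.volume_Ioo]; exact ENNReal.ofReal_lt_top)))
    cdf_integrableOn measurableSet_Ioo hlb
  rwa [setIntegral_const, measureReal_def, Real.volume_Ioo, ENNReal.toReal_ofReal (by linarith),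
    smul_eq_mul, mul_comm] at h2

lemma nvCost_diff_le {b h : ℝ} (hb : 0 < b) (hh : 0 < h) {F : Measure ℝ}
    [IsProbabilityMeasure F] (hInt : Integrable id F) {s q C : ℝ} (hsq : s ≤ q)
    (hub : ∀ t ∈ Ioo s q, (F (Iic t)).toReal ≤ C) :
    nvCost b h F q - nvCost b h F s ≤ ((b + h) * C - b) * (q - s) := by
  rw [nvCost_diff b h hb hh F hInt s q hsq]
  have h1 := integral_cdf_le hsq hub
  nlinarith [mul_le_mul_of_nonneg_left h1 (by linarith : (0:ℝ) ≤ b + h)]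

lemma nvCost_diff_ge {b h : ℝ} (hb : 0 < b) (hh : 0 < h) {F : Measure ℝ}
    [IsProbabilityMeasure F] (hInt : Integrable id F) {s q c : ℝ} (hsq : s ≤ q)
    (hlb : ∀ t ∈ Ioo s q, c ≤ (F (Iic t)).toReal) :
    ((b + h) * c - b) * (q - s) ≤ nvCost b h F q - nvCost b h F s := by
  rw [nvCost_diff b h hb hh F hInt s q hsq]
  have h1 := integral_cdf_ge hsq hlb
  nlinarith [mul_le_mul_of_nonneg_left h1 (by linarith : (0:ℝ) ≤ b + h)]


lemma meas_toReal_mono {F : Measure ℝ} [IsFiniteMeasure F] {A B : Set ℝ} (hAB : A ⊆ B) :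
    (F A).toReal ≤ (F B).toReal :=
  ENNReal.toReal_le_toReal (measure_ne_top _ _) (measure_ne_top _ _) |>.mpr (measure_mono hAB)

lemma Iio_eq_iUnion_Iic (lam : ℝ) : Iio lam = ⋃ n : ℕ, Iic (lam - ((n:ℝ)+1)⁻¹) := by
  ext x
  simp only [mem_Iio, mem_iUnion, mem_Iic]
  constructor
  · intro hx
    obtain ⟨n, hn⟩ := exists_nat_one_div_lt (sub_pos.mpr hx)
    rw [one_div] at hn
    exact ⟨n, by linarith⟩
  · rintro ⟨n, hn⟩
    have : (0:ℝ) < ((n:ℝ)+1)⁻¹ := by positivity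
    linarith

lemma Fp_apply_Iic (G : Measure ℝ) (lam M p t : ℝ) :
    Fp G lam M p (Iic t) = G (Iic t ∩ Iio lam)
      + (if lam ≤ t then ENNReal.ofReal p else 0)
      + (if M ≤ t then ENNReal.ofReal (1 - p - (G (Iio lam)).toReal) else 0) := by
  simp [Fp, Measure.add_apply, Measure.smul_apply, Measure.dirac_apply' _ measurableSet_Iic,
    Measure.restrict_apply measurableSet_Iic, indicator_apply, mem_Iic, smul_eq_mul,
    mul_ite, mul_one, mul_zero]

lemma Fp_facts (G : Measure ℝ) [IsProbabilityMeasure G] (hG0 : G (Iio 0) = 0)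
    (hIntG : Integrable id G) (lam M p : ℝ) (hlam : 0 ≤ lam) (hlamM : lam ≤ M)
    (hp0 : 0 ≤ p) (hpg : p ≤ 1 - (G (Iio lam)).toReal) :
    IsProbabilityMeasure (Fp G lam M p) ∧ Fp G lam M p (Iio 0) = 0 ∧
    Integrable id (Fp G lam M p) ∧ (∀ x, x < lam → Fp G lam M p (Iic x) = G (Iic x)) ∧
    (∀ t, lam ≤ t → t < M → (Fp G lam M p (Iic t)).toReal = (G (Iio lam)).toReal + p) ∧
    (∀ t, M ≤ t → (Fp G lam M p (Iic t)).toReal = 1) := by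
  set g := (G (Iio lam)).toReal with hg
  have hgofReal : G (Iio lam) = ENNReal.ofReal g :=
    (ENNReal.ofReal_toReal (measure_ne_top _ _)).symm
  have hg0 : 0 ≤ g := ENNReal.toReal_nonneg
  have h1pg : 0 ≤ 1 - p - g := by linarith
  refine ⟨?_, ?_, ?_, ?_, ?_, ?_⟩
  · constructor
    rw [Fp]
    simp only [Measure.add_apply, Measure.smul_apply, Measure.restrict_apply_univ,
      Measure.dirac_apply_of_mem (mem_univ _), smul_eq_mul, mul_one]
    rw [hgofReal, ← ENNReal.ofReal_add hg0 hp0, ENNReal.toReal_ofReal hg0,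
      ← ENNReal.ofReal_add (by linarith) h1pg,
      show g + p + (1 - p - g) = (1:ℝ) by ring]
    exact ENNReal.ofReal_one
  · rw [Fp]
    simp only [Measure.add_apply, Measure.smul_apply,
      Measure.restrict_apply measurableSet_Iio,
      Measure.dirac_apply' _ measurableSet_Iio, smul_eq_mul]
    have e1 : G (Iio 0 ∩ Iio lam) = 0 := measure_mono_null inter_subset_left hG0
    have e2 : (Iio (0:ℝ)).indicator (1 : ℝ → ENNReal) lam = 0 := by
      simp [indicator_apply, not_lt.mpr hlam]
    have e3 : (Iio (0:ℝ)).indicator (1 : ℝ → ENNReal) M = 0 := by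
      simp [indicator_apply, not_lt.mpr (hlam.trans hlamM)]
    rw [e1, e2, e3]
    simp
  · have i1 : Integrable id (G.restrict (Iio lam)) := hIntG.restrict
    have i2 : Integrable id (Measure.dirac lam) :=
      (integrable_const lam).congr (ae_eq_dirac' measurable_id).symm
    have i3 : Integrable id (Measure.dirac M) :=
      (integrable_const M).congr (ae_eq_dirac' measurable_id).symm
    exact (i1.add_measure (i2.smul_measure ENNReal.ofReal_ne_top)).add_measure
      (i3.smul_measure ENNReal.ofReal_ne_top)
  · intro x hx
    have hI : Iic x ∩ Iio lam = Iic x :=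
      inter_eq_left.mpr (fun y hy => lt_of_le_of_lt hy hx)
    rw [Fp_apply_Iic, if_neg (not_le.mpr hx), if_neg (not_le.mpr (lt_of_lt_of_le hx hlamM)), hI]
    simp
  · intro t ht htM
    have hI : Iic t ∩ Iio lam = Iio lam :=
      inter_eq_right.mpr (fun y hy => le_trans (le_of_lt hy) ht)
    rw [Fp_apply_Iic, if_pos ht, if_neg (not_le.mpr htM), hI, add_zero, hgofReal,
      ← ENNReal.ofReal_add hg0 hp0, ENNReal.toReal_ofReal (by linarith)]
  · intro t ht
    have hI : Iic t ∩ Iio lam = Iio lam :=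
      inter_eq_right.mpr (fun y hy => le_trans (le_of_lt hy) (hlamM.trans ht))
    rw [Fp_apply_Iic, if_pos (hlamM.trans ht), if_pos ht, hI, hgofReal,
      ← ENNReal.ofReal_add hg0 hp0, ENNReal.toReal_ofReal hg0,
      ← ENNReal.ofReal_add (by linarith) h1pg,
      show g + p + (1 - p - g) = (1:ℝ) by ring]
    simp

lemma ambig_Iio {ρ M : ℝ} {G : Measure ℝ} {lam : ℝ} {F : Measure ℝ}
    (hF : F ∈ Ambig ρ M G lam) : F (Iio lam) = G (Iio lam) := by
  rw [Iio_eq_iUnion_Iic lam, Monotone.measure_iUnion, Monotone.measure_iUnion]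
  · congr 1
    ext n
    refine hF.2 _ ?_
    have : (0:ℝ) < ((n:ℝ)+1)⁻¹ := by positivity
    linarith
  · intro m n hmn
    apply Iic_subset_Iic.mpr
    have h1 : ((m:ℝ)+1) ≤ ((n:ℝ)+1) := by exact_mod_cast Nat.succ_le_succ hmn
    have h2 : (0:ℝ) < (m:ℝ)+1 := by positivity
    gcongr
  · intro m n hmn
    apply Iic_subset_Iic.mpr
    have h1 : ((m:ℝ)+1) ≤ ((n:ℝ)+1) := by exact_mod_cast Nat.succ_le_succ hmn
    have h2 : (0:ℝ) < (m:ℝ)+1 := by positivity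
    gcongr

/-- If `G⁻(λ) < ρ`, then
`Δ = h(b - (b+h)G⁻(λ))(M - λ) / ((b+h)(1 - G⁻(λ)))`, this value is nonnegative,
`q†_G ∈ [λ, M]`, and the infimum defining `Δ` is attained at `q†_G`. -/
theorem stmt1 (b h M lam ρ : ℝ) (hb : 0 < b) (hh : 0 < h) (hM : 0 < M)
    (hlam : 0 ≤ lam) (hρ : ρ = b / (b + h))
    (G : Measure ℝ) (hG : G ∈ GoodDist ρ M)
    (hcen : (G (Iio lam)).toReal < ρ) :
    Risk b h ρ M G lam =
      h * (b - (b + h) * (G (Iio lam)).toReal) * (M - lam) /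
        ((b + h) * (1 - (G (Iio lam)).toReal)) ∧
    0 ≤ Risk b h ρ M G lam ∧
    qDagger b h M G lam ∈ Icc lam M ∧
    Regret b h ρ M G lam (qDagger b h M G lam) = Risk b h ρ M G lam := by
  obtain ⟨hGprob, hG0, hGint, hGq⟩ := hG
  haveI := hGprob
  set g := (G (Iio lam)).toReal with hgdef
  have hbh : (0:ℝ) < b + h := by linarith
  have hρ0 : 0 < ρ := by rw [hρ]; positivity
  have hρ1 : ρ < 1 := by rw [hρ, div_lt_one hbh]; linarith
  have hg0 : 0 ≤ g := ENNReal.toReal_nonneg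
  have hgρ : g < ρ := hcen
  have hg1 : g < 1 := lt_trans hgρ hρ1
  have hbg : (b + h) * g < b := by
    have h' := hgρ
    rw [hρ, lt_div_iff₀ hbh] at h'
    linarith
  have hK : 0 < (b + h) * (1 - g) := mul_pos hbh (by linarith)
  have hcdflt : ∀ t, t < lam → (G (Iic t)).toReal < ρ := fun t ht =>
    lt_of_le_of_lt (meas_toReal_mono (fun y hy => lt_of_le_of_lt hy ht)) hgρ
  have hlamM : lam ≤ M := le_trans (qStar_ge hρ1 hcdflt) hGq
  set qd := qDagger b h M G lam with hqd
  set Δ := h * (b - (b + h) * g) * (M - lam) / ((b + h) * (1 - g)) with hΔ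
  have hqd_eq : qd = lam + (b - (b+h)*g) * (M - lam) / ((b+h)*(1-g)) := by
    rw [hqd, qDagger, ← hgdef]
    have : (1:ℝ) - g ≠ 0 := (by linarith : (0:ℝ) < 1 - g).ne'
    field_simp
    ring
  have hqd_eq2 : qd = M - h * (M - lam) / ((b+h)*(1-g)) := by
    rw [hqd, qDagger, ← hgdef]
    have : (1:ℝ) - g ≠ 0 := (by linarith : (0:ℝ) < 1 - g).ne'
    field_simp
    ring
  have hΔ0 : 0 ≤ Δ := by
    rw [hΔ]
    apply div_nonneg _ hK.le
    have : 0 ≤ b - (b+h)*g := by linarith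
    have : 0 ≤ M - lam := by linarith
    positivity
  have hlamqd : lam ≤ qd := by
    rw [hqd_eq]
    have : 0 ≤ (b - (b+h)*g) * (M - lam) / ((b+h)*(1-g)) := by
      apply div_nonneg _ hK.le
      have : 0 ≤ b - (b+h)*g := by linarith
      have : 0 ≤ M - lam := by linarith
      positivity
    linarith
  have hqdM : qd ≤ M := by
    rw [hqd_eq2]
    have : 0 ≤ h * (M - lam) / ((b+h)*(1-g)) := by
      apply div_nonneg _ hK.le
      have : 0 ≤ M - lam := by linarith
      positivity
    linarith
  have hD1 : h * (qd - lam) = Δ := by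
    rw [hqd_eq, hΔ]
    field_simp
    ring
  have hD2 : (b - (b+h)*g) * (M - qd) = Δ := by
    rw [hqd_eq2, hΔ]
    field_simp
    ring
  have key_upper : ∀ F ∈ Ambig ρ M G lam,
      nvCost b h F qd - nvCost b h F (qStar ρ F) ≤ Δ := by
    intro F hF
    obtain ⟨⟨hFprob, hF0, hFint, hFq⟩, hFagree⟩ := hF
    haveI := hFprob
    have hFlt : ∀ t, t < lam → (F (Iic t)).toReal < ρ := by
      intro t ht
      rw [hFagree t ht]
      exact hcdflt t ht
    have hsl : lam ≤ qStar ρ F := qStar_ge hρ1 hFlt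
    have hFIio : F (Iio lam) = G (Iio lam) := ambig_Iio ⟨⟨hFprob, hF0, hFint, hFq⟩, hFagree⟩
    have hFg : ∀ t, lam ≤ t → g ≤ (F (Iic t)).toReal := by
      intro t ht
      calc g = (F (Iio lam)).toReal := by rw [hFIio]
        _ ≤ (F (Iic t)).toReal :=
          meas_toReal_mono (fun y hy => le_trans (le_of_lt hy) ht)
    rcases le_or_gt (qStar ρ F) qd with hc | hc
    · have h1 := nvCost_diff_le hb hh hFint hc (C := 1) (fun t _ => cdf_le_one t)
      nlinarith [h1, hD1, mul_nonneg hh.le (sub_nonneg.mpr hsl)]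
    · have h1 := nvCost_diff_ge hb hh hFint hc.le (c := g)
        (fun t ht => hFg t (le_trans hlamqd ht.1.le))
      nlinarith [h1, hD2, mul_nonneg (by linarith : (0:ℝ) ≤ b - (b+h)*g)
        (by linarith [hFq] : (0:ℝ) ≤ M - qStar ρ F)]
  have hGmem : G ∈ Ambig ρ M G lam := ⟨⟨hGprob, hG0, hGint, hGq⟩, fun x _ => rfl⟩
  have hSne : ∀ q : ℝ,
      ((fun F => nvCost b h F q - nvCost b h F (qStar ρ F)) '' Ambig ρ M G lam).Nonempty :=
    fun q => ⟨_, mem_image_of_mem _ hGmem⟩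
  have hbddS : ∀ q ∈ Icc (0:ℝ) M,
      BddAbove ((fun F => nvCost b h F q - nvCost b h F (qStar ρ F)) '' Ambig ρ M G lam) := by
    intro q hq
    refine ⟨b * M + h * M, ?_⟩
    rintro r ⟨F, hF, rfl⟩
    obtain ⟨⟨hFprob, hF0, hFint, hFq⟩, hFagree⟩ := hF
    haveI := hFprob
    have hFlt : ∀ t, t < lam → (F (Iic t)).toReal < ρ := by
      intro t ht
      rw [hFagree t ht]
      exact hcdflt t ht
    have hsl : lam ≤ qStar ρ F := qStar_ge hρ1 hFlt
    show nvCost b h F q - nvCost b h F (qStar ρ F) ≤ b * M + h * M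
    rcases le_or_gt (qStar ρ F) q with hc | hc
    · have h1 := nvCost_diff_le hb hh hFint hc (C := 1) (fun t _ => cdf_le_one t)
      nlinarith [h1, mul_nonneg hh.le
          (by linarith [hq.2, hsl, hlam] : (0:ℝ) ≤ M - q + qStar ρ F),
        mul_nonneg hb.le hM.le]
    · have h1 := nvCost_diff_ge hb hh hFint hc.le (c := 0) (fun t _ => cdf_nonneg t)
      nlinarith [h1, mul_nonneg hb.le
          (by linarith [hq.1, hFq] : (0:ℝ) ≤ M - qStar ρ F + q),
        mul_nonneg hh.le hM.le]
  obtain ⟨hP1, h01, hint1, hagree1, hmid1, hright1⟩ :=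
    Fp_facts G hG0 hGint lam M (1 - g) hlam hlamM (by linarith) le_rfl
  haveI := hP1
  have hFl1 : ∀ t, lam ≤ t → ((Fp G lam M (1 - g)) (Iic t)).toReal = 1 := by
    intro t ht
    rcases lt_or_ge t M with h' | h'
    · rw [hmid1 t ht h']
      ring
    · exact hright1 t h'
  have hql : qStar ρ (Fp G lam M (1 - g)) = lam := by
    apply le_antisymm
    · apply qStar_le hρ0 h01
      rw [hFl1 lam le_rfl]
      exact hρ1.le
    · apply qStar_ge hρ1
      intro t ht
      rw [hagree1 t ht]
      exact hcdflt t ht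
  have hFlmem : Fp G lam M (1 - g) ∈ Ambig ρ M G lam :=
    ⟨⟨hP1, h01, hint1, hql.le.trans hlamM⟩, hagree1⟩
  obtain ⟨hP0, h00, hint0, hagree0, hmid0, hright0⟩ :=
    Fp_facts G hG0 hGint lam M 0 hlam hlamM le_rfl (by linarith)
  haveI := hP0
  have hq0 : qStar ρ (Fp G lam M 0) = M := by
    apply le_antisymm
    · apply qStar_le hρ0 h00
      rw [hright0 M le_rfl]
      exact hρ1.le
    · apply qStar_ge hρ1
      intro t ht
      rcases lt_or_ge t lam with h' | h'
      · rw [hagree0 t h']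
        exact hcdflt t h'
      · rw [hmid0 t h' ht, add_zero]
        exact hgρ
  have hF0mem : Fp G lam M 0 ∈ Ambig ρ M G lam := ⟨⟨hP0, h00, hint0, hq0.le⟩, hagree0⟩
  have hF0le : ∀ t, t < M → ((Fp G lam M 0) (Iic t)).toReal ≤ g := by
    intro t ht
    rcases lt_or_ge t lam with h' | h'
    · rw [hagree0 t h']
      exact meas_toReal_mono (fun y hy => lt_of_le_of_lt hy h')
    · rw [hmid0 t h' ht, add_zero]
  have hlower : ∀ q ∈ Icc (0:ℝ) M, Δ ≤ Regret b h ρ M G lam q := by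
    intro q hq
    rcases le_or_gt qd q with hcase | hcase
    · have helem : Δ ≤ nvCost b h (Fp G lam M (1 - g)) q
          - nvCost b h (Fp G lam M (1 - g)) (qStar ρ (Fp G lam M (1 - g))) := by
        rw [hql]
        have h1 := nvCost_diff_ge hb hh hint1 (le_trans hlamqd hcase) (c := 1)
          (fun t ht => (hFl1 t ht.1.le).ge)
        nlinarith [h1, hD1, mul_nonneg hh.le (sub_nonneg.mpr hcase)]
      exact le_trans helem (le_csSup (hbddS q hq) (mem_image_of_mem _ hFlmem))
    · have helem : Δ ≤ nvCost b h (Fp G lam M 0) q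
          - nvCost b h (Fp G lam M 0) (qStar ρ (Fp G lam M 0)) := by
        rw [hq0]
        have h1 := nvCost_diff_le hb hh hint0 hq.2 (C := g) (fun t ht => hF0le t ht.2)
        nlinarith [h1, hD2, mul_nonneg (by linarith : (0:ℝ) ≤ b - (b+h)*g)
          (by linarith : (0:ℝ) ≤ qd - q)]
      exact le_trans helem (le_csSup (hbddS q hq) (mem_image_of_mem _ hF0mem))
  have hupper : Regret b h ρ M G lam qd ≤ Δ := by
    apply csSup_le (hSne qd)
    rintro r ⟨F, hF, rfl⟩
    exact key_upper F hF
  have hqdIcc : qd ∈ Icc (0:ℝ) M := ⟨le_trans hlam hlamqd, hqdM⟩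
  have hregqd : Regret b h ρ M G lam qd = Δ := le_antisymm hupper (hlower qd hqdIcc)
  have hrisk : Risk b h ρ M G lam = Δ := by
    apply le_antisymm
    · rw [Risk]
      exact le_trans
        (csInf_le ⟨Δ, by rintro r ⟨q, hq, rfl⟩; exact hlower q hq⟩
          (mem_image_of_mem _ hqdIcc)) hregqd.le
    · rw [Risk]
      refine le_csInf ⟨_, mem_image_of_mem _ hqdIcc⟩ ?_
      rintro r ⟨q, hq, rfl⟩
      exact hlower q hq
  exact ⟨hrisk, hrisk ▸ hΔ0, ⟨hlamqd, hqdM⟩, by rw [hregqd, hrisk]⟩
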